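/- Let ρ : [0,1] → ℝ^d be a C¹ function with ρ' (t) = F(t) + σ φ(t) where σ > 0, ⟨ρ(t), F(t)⟩ ≤ 0 for all t, and φ(t) = −2ϖ ρ(t)/|ρ(t)|^β on {ρ(t) ≠ 0} (with φ(t) = 0 when ρ(t) = 0), for some β ∈ (0,1) and ϖ = 2|ρ(0)|^β/(σβ). Then ρ(t) = 0 for all t ∈ [1/2, 1]. -/

import Mathlib

open Classical in
theorem stmt5 {d : ℕ} (ρ F φ : ℝ → EuclideanSpace ℝ (Fin d))
    (σ β ϖ : ℝ) (hσ : 0 < σ) (hβ : β ∈ Set.Ioo (0:ℝ) 1)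
    (hϖ : ϖ = 2 * ‖ρ 0‖ ^ β / (σ * β))
    (hderiv : ∀ t ∈ Set.Icc (0:ℝ) 1, HasDerivAt ρ (F t + σ • φ t) t)
    (hdiss : ∀ t ∈ Set.Icc (0:ℝ) 1, (inner ℝ (ρ t) (F t) : ℝ) ≤ 0)
    (hφ : ∀ t ∈ Set.Icc (0:ℝ) 1,
      φ t = if ρ t = 0 then 0 else (-2 * ϖ / ‖ρ t‖ ^ β) • ρ t) :
    ∀ t ∈ Set.Icc (1/2 : ℝ) 1, ρ t = 0 := by
  have hβ0 : 0 < β := hβ.1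
  have hβ1 : β < 1 := hβ.2
  have hϖ0 : 0 ≤ ϖ := by
    rw [hϖ]
    positivity
  set z : ℝ → ℝ := fun t => (inner ℝ (ρ t) (ρ t) : ℝ) with hz_def
  have hz_nonneg : ∀ t, 0 ≤ z t := fun t => real_inner_self_nonneg
  have hz_eq : ∀ t, z t = ‖ρ t‖ ^ (2:ℝ) := by
    intro t
    have h : z t = ‖ρ t‖ ^ 2 := real_inner_self_eq_norm_sq _
    rw [h, Real.rpow_two]
  set D : ℝ → ℝ := fun t => 2 * (inner ℝ (ρ t) (F t + σ • φ t) : ℝ) with hD_def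
  have hz : ∀ t ∈ Set.Icc (0:ℝ) 1, HasDerivAt z (D t) t := by
    intro t ht
    have h := (hderiv t ht).inner ℝ (hderiv t ht)
    have e : (inner ℝ (ρ t) (F t + σ • φ t) : ℝ) + inner ℝ (F t + σ • φ t) (ρ t)
        = D t := by
      show _ = 2 * (inner ℝ (ρ t) (F t + σ • φ t) : ℝ)
      rw [real_inner_comm (F t + σ • φ t) (ρ t)]; ring
    exact e ▸ h
  -- inner ρ φ
  have hiφ : ∀ t ∈ Set.Icc (0:ℝ) 1, ρ t ≠ 0 →
      (inner ℝ (ρ t) (φ t) : ℝ) = -2 * ϖ * ‖ρ t‖ ^ (2 - β) := by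
    intro t ht hne
    rw [hφ t ht, if_neg hne, real_inner_smul_right, real_inner_self_eq_norm_sq]
    have hn : (0:ℝ) < ‖ρ t‖ := norm_pos_iff.mpr hne
    rw [Real.rpow_sub hn, Real.rpow_two]
    field_simp
    try ring
  have hD0 : ∀ t ∈ Set.Icc (0:ℝ) 1, D t ≤ 0 := by
    intro t ht
    show 2 * (inner ℝ (ρ t) (F t + σ • φ t) : ℝ) ≤ 0
    have h1 : (inner ℝ (ρ t) (F t + σ • φ t) : ℝ)
        = inner ℝ (ρ t) (F t) + σ * inner ℝ (ρ t) (φ t) := by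
      rw [inner_add_right, real_inner_smul_right]
    rw [h1]
    by_cases hne : ρ t = 0
    · have h0 : (inner ℝ (ρ t) (φ t) : ℝ) = 0 := by rw [hne, inner_zero_left]
      rw [h0]
      nlinarith [hdiss t ht]
    · have h2 := hiφ t ht hne
      have h3 : (0:ℝ) ≤ ‖ρ t‖ ^ (2 - β) := Real.rpow_nonneg (norm_nonneg _) _
      rw [h2]
      nlinarith [hdiss t ht, mul_nonneg (mul_nonneg hσ.le hϖ0) h3]
  -- z antitone on [0,1]
  have hz_anti : AntitoneOn z (Set.Icc (0:ℝ) 1) := by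
    apply antitoneOn_of_deriv_nonpos (convex_Icc 0 1)
    · exact fun t ht => (hz t ht).continuousAt.continuousWithinAt
    · intro t ht
      rw [interior_Icc] at ht
      exact (hz t (Set.mem_Icc_of_Ioo ht)).differentiableAt.differentiableWithinAt
    · intro t ht
      rw [interior_Icc] at ht
      have ht' := Set.mem_Icc_of_Ioo ht
      rw [(hz t ht').deriv]
      exact hD0 t ht'
  -- suffices: some t₀ ∈ [0, 1/2] with ρ t₀ = 0
  suffices hex : ∃ t₀ ∈ Set.Icc (0:ℝ) (1/2), ρ t₀ = 0 by
    obtain ⟨t₀, ht₀, hρt₀⟩ := hex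
    intro t ht
    have ht01 : t ∈ Set.Icc (0:ℝ) 1 := ⟨le_trans (by norm_num) ht.1, ht.2⟩
    have ht₀01 : t₀ ∈ Set.Icc (0:ℝ) 1 := ⟨ht₀.1, le_trans ht₀.2 (by norm_num)⟩
    have hle : z t ≤ z t₀ := hz_anti ht₀01 ht01 (le_trans ht₀.2 ht.1)
    have hz₀ : z t₀ = 0 := by rw [hz_def]; simp [hρt₀]
    have : z t = 0 := le_antisymm (hz₀ ▸ hle) (hz_nonneg t)
    rwa [hz_def, inner_self_eq_zero] at this
  by_contra hcon
  push_neg at hcon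
  -- ρ t ≠ 0 on [0,1/2], in particular ρ 0 ≠ 0
  have hρ0 : ρ 0 ≠ 0 := hcon 0 ⟨le_refl 0, by norm_num⟩
  have hρ0n : (0:ℝ) < ‖ρ 0‖ ^ β := Real.rpow_pos_of_pos (norm_pos_iff.mpr hρ0) β
  set c : ℝ := 2 * σ * ϖ * β with hc_def
  set g : ℝ → ℝ := fun t => z t ^ (β/2) + c * t with hg_def
  have hsub : Set.Icc (0:ℝ) (1/2) ⊆ Set.Icc (0:ℝ) 1 := Set.Icc_subset_Icc_right (by norm_num)
  have hzpos : ∀ t ∈ Set.Icc (0:ℝ) (1/2), 0 < z t := by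
    intro t ht
    rw [hz_eq t]
    exact Real.rpow_pos_of_pos (norm_pos_iff.mpr (hcon t ht)) _
  have hg_deriv : ∀ t ∈ Set.Icc (0:ℝ) (1/2),
      HasDerivAt g (D t * (β/2) * z t ^ (β/2 - 1) + c) t := by
    intro t ht
    have h := ((hz t (hsub ht)).rpow_const (p := β/2) (Or.inl (hzpos t ht).ne')).add
      ((hasDerivAt_id t).const_mul c)
    rw [hg_def]
    simpa [Pi.add_def] using h
  have hg_deriv_nonpos : ∀ t ∈ Set.Icc (0:ℝ) (1/2),
      D t * (β/2) * z t ^ (β/2 - 1) + c ≤ 0 := by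
    intro t ht
    have hne := hcon t ht
    have hD : D t ≤ -(4 * σ * ϖ) * z t ^ (1 - β/2) := by
      show 2 * (inner ℝ (ρ t) (F t + σ • φ t) : ℝ) ≤ _
      have h1 : (inner ℝ (ρ t) (F t + σ • φ t) : ℝ)
          = inner ℝ (ρ t) (F t) + σ * inner ℝ (ρ t) (φ t) := by
        rw [inner_add_right, real_inner_smul_right]
      have h2 := hiφ t (hsub ht) hne
      have h3 : ‖ρ t‖ ^ (2 - β) = z t ^ (1 - β/2) := by
        rw [hz_eq t, ← Real.rpow_mul (norm_nonneg _),
          show (2:ℝ) * (1 - β/2) = 2 - β by ring]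
      rw [h1, h2, h3]
      nlinarith [hdiss t (hsub ht)]
    have hzp := hzpos t ht
    have hpow_pos : (0:ℝ) < z t ^ (β/2 - 1) := Real.rpow_pos_of_pos hzp _
    have hmul : D t * (β/2) * z t ^ (β/2 - 1)
        ≤ -(4 * σ * ϖ) * z t ^ (1 - β/2) * (β/2) * z t ^ (β/2 - 1) := by
      have := mul_le_mul_of_nonneg_right
        (mul_le_mul_of_nonneg_right hD (by linarith : (0:ℝ) ≤ β/2)) hpow_pos.le
      linarith
    have hprod : z t ^ (1 - β/2) * z t ^ (β/2 - 1) = 1 := by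
      rw [← Real.rpow_add hzp]
      norm_num
    calc D t * (β/2) * z t ^ (β/2 - 1) + c
        ≤ -(4 * σ * ϖ) * z t ^ (1 - β/2) * (β/2) * z t ^ (β/2 - 1) + c := by linarith
      _ = -(2 * σ * ϖ * β) * (z t ^ (1 - β/2) * z t ^ (β/2 - 1)) + c := by ring
      _ = 0 := by rw [hprod, hc_def]; ring
  have hg_anti : AntitoneOn g (Set.Icc (0:ℝ) (1/2)) := by
    apply antitoneOn_of_deriv_nonpos (convex_Icc 0 (1/2))
    · exact fun t ht => (hg_deriv t ht).continuousAt.continuousWithinAt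
    · intro t ht
      rw [interior_Icc] at ht
      exact (hg_deriv t (Set.mem_Icc_of_Ioo ht)).differentiableAt.differentiableWithinAt
    · intro t ht
      rw [interior_Icc] at ht
      have ht' := Set.mem_Icc_of_Ioo ht
      rw [(hg_deriv t ht').deriv]
      exact hg_deriv_nonpos t ht'
  have h0m : (0:ℝ) ∈ Set.Icc (0:ℝ) (1/2) := by norm_num
  have hhm : (1/2:ℝ) ∈ Set.Icc (0:ℝ) (1/2) := by norm_num
  have hle := hg_anti h0m hhm (by norm_num : (0:ℝ) ≤ 1/2)
  -- g (1/2) ≤ g 0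
  have hz0 : z 0 ^ (β/2) = ‖ρ 0‖ ^ β := by
    rw [hz_eq 0, ← Real.rpow_mul (norm_nonneg _),
      show (2:ℝ) * (β/2) = β by ring]
  have hcval : c * (1/2) = 2 * ‖ρ 0‖ ^ β := by
    rw [hc_def, hϖ]
    field_simp
  have hg0 : g 0 = ‖ρ 0‖ ^ β := by
    show z 0 ^ (β/2) + c * 0 = _
    rw [hz0]; ring
  have hgh : g (1/2) = z (1/2) ^ (β/2) + 2 * ‖ρ 0‖ ^ β := by
    show z (1/2) ^ (β/2) + c * (1/2) = _
    rw [hcval]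
  have hznn : 0 ≤ z (1/2) ^ (β/2) := Real.rpow_nonneg (hz_nonneg _) _
  rw [hgh, hg0] at hle
  linarith
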